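/- For all integers n and m with 1 ≤ m < n, the cubic polynomial P_{n,m}(x) = 3n·x³ − (2n+5m)·x² + 5m·x − m has exactly one real root, and this root lies in the open interval (0, 1). -/

import Mathlib

/-- For integers `1 ≤ m < n`, the cubic
`P_{n,m}(x) = 3nx³ − (2n+5m)x² + 5mx − m` has exactly one real root,
and this root lies in `(0, 1)`. -/
theorem Pnm_unique_real_root (n m : ℤ) (hm : 1 ≤ m) (hmn : m < n) :
    ∃ x : ℝ, (3 * (n : ℝ) * x ^ 3 - (2 * (n : ℝ) + 5 * (m : ℝ)) * x ^ 2
        + 5 * (m : ℝ) * x - (m : ℝ) = 0) ∧ 0 < x ∧ x < 1 ∧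
      ∀ y : ℝ, (3 * (n : ℝ) * y ^ 3 - (2 * (n : ℝ) + 5 * (m : ℝ)) * y ^ 2
        + 5 * (m : ℝ) * y - (m : ℝ) = 0) → y = x := by
  have hm' : (1 : ℝ) ≤ (m : ℝ) := by exact_mod_cast hm
  have hmn' : (m : ℝ) < (n : ℝ) := by exact_mod_cast hmn
  have hn0 : (0 : ℝ) < (n : ℝ) := by linarith
  -- uniqueness: any two roots are equal
  have uniq : ∀ a b : ℝ,
      (3 * (n : ℝ) * a ^ 3 - (2 * (n : ℝ) + 5 * (m : ℝ)) * a ^ 2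
        + 5 * (m : ℝ) * a - (m : ℝ) = 0) →
      (3 * (n : ℝ) * b ^ 3 - (2 * (n : ℝ) + 5 * (m : ℝ)) * b ^ 2
        + 5 * (m : ℝ) * b - (m : ℝ) = 0) → a = b := by
    intro a b ha hb
    by_contra hab
    have hab' : a - b ≠ 0 := sub_ne_zero.mpr hab
    set N : ℝ := (n : ℝ)
    set M : ℝ := (m : ℝ)
    set r : ℝ := (2 * N + 5 * M) / (3 * N) - a - b with hr
    have h1 : 3 * N * (a + b + r) = 2 * N + 5 * M := by
      rw [hr]
      field_simp [hn0.ne']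
      ring
    have hpa : (5 * M - 3 * N * (a * b + a * r + b * r)) * a
        + (-M + 3 * N * (a * b * r)) = 0 := by
      linear_combination ha - a ^ 2 * h1
    have hpb : (5 * M - 3 * N * (a * b + a * r + b * r)) * b
        + (-M + 3 * N * (a * b * r)) = 0 := by
      linear_combination hb - b ^ 2 * h1
    have hp : 5 * M - 3 * N * (a * b + a * r + b * r) = 0 := by
      have : (5 * M - 3 * N * (a * b + a * r + b * r)) * (a - b) = 0 := by
        linear_combination hpa - hpb
      rcases mul_eq_zero.mp this with h | h
      · exact h
      · exact absurd h hab'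
    have hq : -M + 3 * N * (a * b * r) = 0 := by linear_combination hpa - a * hp
    have h2 : 3 * N * (a * b + a * r + b * r) = 5 * M := by linarith
    have h3 : 3 * N * (a * b * r) = M := by linarith
    have key : ((a - b) * (a - r) * (b - r)) ^ 2 * (3 * N) ^ 4
        = (3 * N * (a + b + r)) ^ 2 * (3 * N * (a * b + a * r + b * r)) ^ 2
          - 4 * (3 * N) * (3 * N * (a * b + a * r + b * r)) ^ 3
          - 4 * (3 * N * (a + b + r)) ^ 3 * (3 * N * (a * b * r))
          + 18 * (3 * N) * (3 * N * (a + b + r)) * (3 * N * (a * b + a * r + b * r))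
              * (3 * N * (a * b * r))
          - 27 * (3 * N) ^ 2 * (3 * N * (a * b * r)) ^ 2 := by ring
    rw [h1, h2, h3] at key
    nlinarith [key, sq_nonneg ((a - b) * (a - r) * (b - r)),
      sq_nonneg (10 * M - 5 * N), mul_pos (mul_pos (by linarith : (0:ℝ) < M)
        (by linarith : (0:ℝ) < N - M)) (by nlinarith [sq_nonneg (10 * M - 5 * N)] :
        (0:ℝ) < 125 * M ^ 2 - 125 * M * N + 32 * N ^ 2), pow_pos hn0 4]
  -- existence via IVT
  set f : ℝ → ℝ := fun x => 3 * (n : ℝ) * x ^ 3 - (2 * (n : ℝ) + 5 * (m : ℝ)) * x ^ 2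
      + 5 * (m : ℝ) * x - (m : ℝ) with hf
  have hcont : ContinuousOn f (Set.Icc (0:ℝ) 1) := by
    apply Continuous.continuousOn; fun_prop
  have h0 : f 0 = -(m : ℝ) := by simp [hf]
  have h1 : f 1 = (n : ℝ) - (m : ℝ) := by simp [hf]; ring
  have hmem : (0:ℝ) ∈ Set.Ioo (f 0) (f 1) := by
    rw [h0, h1]; constructor <;> simp <;> linarith
  obtain ⟨x, hx, hfx⟩ := intermediate_value_Ioo (by norm_num : (0:ℝ) ≤ 1) hcont hmem
  exact ⟨x, hfx, hx.1, hx.2, fun y hy => uniq y x hy hfx⟩
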